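/- Let M ≥ 0 and let T^{(M+1)} be the (M+1)×(M+1) discrete Laplacian. The set of real eigenvalues of T^{(M+1)} is exactly { 2 − 2·cos(kπ/(M+2)) : k = 1, 2, …, M+1 }, and every eigenvalue of T^{(M+1)} (over ℂ) is real. -/

import Mathlib

open Matrix Real

/-- The `(n)×(n)` discrete Laplacian: `2` on the diagonal, `-1` on the
sub/super-diagonals, over a commutative ring `R`. -/
def discreteLaplacian (n : ℕ) (R : Type*) [CommRing R] : Matrix (Fin n) (Fin n) R :=
  fun i j =>
    if (i : ℕ) = (j : ℕ) then 2
    else if (i : ℕ) + 1 = (j : ℕ) ∨ (j : ℕ) + 1 = (i : ℕ) then -1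
    else 0

noncomputable def lapVec (M k : ℕ) : Fin (M+1) → ℝ :=
  fun i => Real.sin (((i : ℕ) + 1) * ((k : ℝ) * Real.pi / ((M : ℝ) + 2)))

lemma lapVec_eigen (M k : ℕ) :
    discreteLaplacian (M+1) ℝ *ᵥ lapVec M k =
      (2 - 2 * Real.cos ((k : ℝ) * Real.pi / ((M : ℝ) + 2))) • lapVec M k := by
  set θ : ℝ := (k : ℝ) * Real.pi / ((M : ℝ) + 2) with hθ
  have hM2 : ((M : ℝ) + 2) ≠ 0 := by positivity
  have hbound : Real.sin (((M : ℝ) + 2) * θ) = 0 := by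
    rw [hθ]
    have : ((M : ℝ) + 2) * ((k : ℝ) * Real.pi / ((M : ℝ) + 2)) = (k : ℝ) * Real.pi := by
      field_simp
    rw [this, Real.sin_nat_mul_pi]
  funext i
  have hsplit : ∀ j : Fin (M+1),
      discreteLaplacian (M+1) ℝ i j * lapVec M k j =
        (if i = j then 2 * lapVec M k j else 0)
        + (if (j : ℕ) + 1 = (i : ℕ) then -lapVec M k j else 0)
        + (if (i : ℕ) + 1 = (j : ℕ) then -lapVec M k j else 0) := by
    intro j
    unfold discreteLaplacian
    rcases eq_or_ne i j with h | h
    · subst h; simp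
    · have hne : (i : ℕ) ≠ (j : ℕ) := fun hh => h (Fin.ext hh)
      simp only [hne, if_false, h, if_false]
      by_cases h1 : (j : ℕ) + 1 = (i : ℕ) <;> by_cases h2 : (i : ℕ) + 1 = (j : ℕ) <;>
        simp [h1, h2] <;> omega
  have S1 : ∑ j : Fin (M+1), (if i = j then 2 * lapVec M k j else 0)
      = 2 * lapVec M k i := by
    rw [Finset.sum_ite_eq]; simp
  have S2 : ∑ j : Fin (M+1), (if (j : ℕ) + 1 = (i : ℕ) then -lapVec M k j else 0)
      = -Real.sin ((i : ℕ) * θ) := by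
    rcases Nat.eq_zero_or_pos (i : ℕ) with h0 | hpos
    · rw [Finset.sum_eq_zero]
      · simp [h0]
      · intro j _
        rw [if_neg]; omega
    · obtain ⟨m, hm⟩ : ∃ m, (i : ℕ) = m + 1 := ⟨(i : ℕ) - 1, by omega⟩
      have hmlt : m < M + 1 := by have := i.isLt; omega
      rw [Finset.sum_eq_single (⟨m, hmlt⟩ : Fin (M+1))]
      · simp [lapVec, hm, hθ]
      · intro j _ hj
        rw [if_neg]
        intro hc
        exact hj (Fin.ext (by simp; omega))
      · intro h; exact absurd (Finset.mem_univ _) h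
  have S3 : ∑ j : Fin (M+1), (if (i : ℕ) + 1 = (j : ℕ) then -lapVec M k j else 0)
      = -Real.sin (((i : ℕ) + 2) * θ) := by
    rcases lt_or_ge ((i : ℕ) + 1) (M + 1) with hlt | hge
    · rw [Finset.sum_eq_single (⟨(i : ℕ) + 1, hlt⟩ : Fin (M+1))]
      · simp only [if_pos rfl]
        simp [lapVec]
        ring_nf
        rw [hθ]; ring_nf
      · intro j _ hj
        rw [if_neg]
        intro hc
        exact hj (Fin.ext (by simp; omega))
      · intro h; exact absurd (Finset.mem_univ _) h
    · have hi : (i : ℕ) = M := by have := i.isLt; omega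
      rw [Finset.sum_eq_zero]
      · rw [hi, hbound]; norm_num
      · intro j _
        rw [if_neg]; have := j.isLt; omega
  have key : (discreteLaplacian (M+1) ℝ *ᵥ lapVec M k) i
      = 2 * lapVec M k i - Real.sin ((i : ℕ) * θ) - Real.sin (((i : ℕ) + 2) * θ) := by
    simp only [mulVec, dotProduct]
    rw [Finset.sum_congr rfl (fun j _ => hsplit j), Finset.sum_add_distrib,
      Finset.sum_add_distrib, S1, S2, S3]
    ring
  rw [key]
  have trig : Real.sin ((i : ℕ) * θ) + Real.sin (((i : ℕ) + 2) * θ)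
      = 2 * Real.cos θ * Real.sin (((i : ℕ) + 1) * θ) := by
    have e1 : ((i : ℕ) : ℝ) * θ = (((i : ℕ) : ℝ) + 1) * θ - θ := by ring
    have e2 : (((i : ℕ) : ℝ) + 2) * θ = (((i : ℕ) : ℝ) + 1) * θ + θ := by ring
    rw [e1, e2, Real.sin_sub, Real.sin_add]
    ring
  simp only [Pi.smul_apply, smul_eq_mul, lapVec]
  nlinarith [trig]

lemma lapVec_ne_zero (M k : ℕ) (hk1 : 1 ≤ k) (hk2 : k ≤ M + 1) : lapVec M k ≠ 0 := by
  intro h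
  have h0 := congrFun h 0
  have hθpos : 0 < (k : ℝ) * Real.pi / ((M : ℝ) + 2) := by
    apply div_pos
    · have : (1 : ℝ) ≤ (k : ℝ) := by exact_mod_cast hk1
      nlinarith [Real.pi_pos]
    · positivity
  have hθlt : (k : ℝ) * Real.pi / ((M : ℝ) + 2) < Real.pi := by
    rw [div_lt_iff₀ (by positivity)]
    have : (k : ℝ) < (M : ℝ) + 2 := by exact_mod_cast (by omega : k < M + 2)
    nlinarith [Real.pi_pos]
  have : 0 < Real.sin ((k : ℝ) * Real.pi / ((M : ℝ) + 2)) :=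
    Real.sin_pos_of_pos_of_lt_pi hθpos hθlt
  simp only [lapVec, Pi.zero_apply] at h0
  rw [show (((0 : Fin (M+1)) : ℕ) : ℝ) + 1 = 1 by norm_num, one_mul] at h0
  linarith [this, h0.le, h0.ge]

lemma lapMu_strictMono (M : ℕ) {a b : ℕ} (hab : a < b) (hb : b ≤ M + 1) :
    2 - 2 * Real.cos ((a : ℝ) * Real.pi / ((M : ℝ) + 2)) <
      2 - 2 * Real.cos ((b : ℝ) * Real.pi / ((M : ℝ) + 2)) := by
  have h := Real.cos_lt_cos_of_nonneg_of_le_pi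
    (x := (a : ℝ) * Real.pi / ((M : ℝ) + 2)) (y := (b : ℝ) * Real.pi / ((M : ℝ) + 2))
    (by positivity)
    (by
      rw [div_le_iff₀ (by positivity)]
      have : (b : ℝ) ≤ (M : ℝ) + 2 := by exact_mod_cast (by omega : b ≤ M + 2)
      nlinarith [Real.pi_pos])
    (by
      have hab' : (a : ℝ) < (b : ℝ) := by exact_mod_cast hab
      apply div_lt_div_of_pos_right _ (by positivity)
      nlinarith [Real.pi_pos])
  linarith

lemma discreteLaplacian_map (M : ℕ) :
    discreteLaplacian (M+1) ℂ = (discreteLaplacian (M+1) ℝ).map (Complex.ofRealHom) := by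
  funext i j
  simp only [Matrix.map_apply]
  unfold discreteLaplacian
  split_ifs <;> simp

lemma lapVec_eigen_C (M k : ℕ) :
    discreteLaplacian (M+1) ℂ *ᵥ (fun i => ((lapVec M k i : ℝ) : ℂ)) =
      (((2 - 2 * Real.cos ((k : ℝ) * Real.pi / ((M : ℝ) + 2)) : ℝ) : ℂ)) •
        (fun i => ((lapVec M k i : ℝ) : ℂ)) := by
  funext i
  have h1 := RingHom.map_mulVec (Complex.ofRealHom) (discreteLaplacian (M+1) ℝ) (lapVec M k) i
  have h2 := congrFun (lapVec_eigen M k) i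
  rw [discreteLaplacian_map]
  have : ((fun i => ((lapVec M k i : ℝ) : ℂ)) : Fin (M+1) → ℂ)
      = ⇑Complex.ofRealHom ∘ lapVec M k := rfl
  rw [this, ← h1, h2]
  simp [Complex.ofReal_mul]

lemma lapVecC_ne_zero (M k : ℕ) (hk1 : 1 ≤ k) (hk2 : k ≤ M + 1) :
    (fun i => ((lapVec M k i : ℝ) : ℂ)) ≠ (0 : Fin (M+1) → ℂ) := by
  intro h
  apply lapVec_ne_zero M k hk1 hk2
  funext i
  have := congrFun h i
  simpa using this

/-- the real eigenvalues of the discrete Laplacian `T^{(M+1)}`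
are exactly `2 − 2 cos(kπ/(M+2))`, `k = 1, …, M+1`, and every complex
eigenvalue is real. -/
theorem discreteLaplacian_eigenvalues (M : ℕ) :
    ({μ : ℝ | ∃ v : Fin (M + 1) → ℝ, v ≠ 0 ∧
        discreteLaplacian (M + 1) ℝ *ᵥ v = μ • v} =
      {μ : ℝ | ∃ k : ℕ, 1 ≤ k ∧ k ≤ M + 1 ∧
        μ = 2 - 2 * Real.cos (k * Real.pi / (M + 2))}) ∧
    (∀ μ : ℂ, (∃ v : Fin (M + 1) → ℂ, v ≠ 0 ∧
        discreteLaplacian (M + 1) ℂ *ᵥ v = μ • v) → μ.im = 0) := by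
  constructor
  · ext μ
    simp only [Set.mem_setOf_eq]
    constructor
    · rintro ⟨v, hv0, hv⟩
      by_contra hμ
      push_neg at hμ
      set f : Module.End ℝ (Fin (M+1) → ℝ) := (discreteLaplacian (M+1) ℝ).mulVecLin with hf
      set μf : Fin (M+2) → ℝ := Fin.cases μ
        (fun j => 2 - 2 * Real.cos ((((j : ℕ) + 1 : ℕ) : ℝ) * Real.pi / ((M : ℝ) + 2)))
        with hμf
      set w : Fin (M+2) → (Fin (M+1) → ℝ) := Fin.cases v
        (fun j => lapVec M ((j : ℕ) + 1)) with hw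
      have heig : ∀ i, f.HasEigenvector (μf i) (w i) := by
        intro i
        induction i using Fin.cases with
        | zero =>
          refine ⟨Module.End.mem_eigenspace_iff.2 ?_, by simpa [hw] using hv0⟩
          simp only [hμf, hw, Fin.cases_zero, hf, Matrix.mulVecLin_apply]
          exact hv
        | succ j =>
          refine ⟨Module.End.mem_eigenspace_iff.2 ?_, ?_⟩
          · simp only [hμf, hw, Fin.cases_succ, hf, Matrix.mulVecLin_apply]
            exact lapVec_eigen M ((j : ℕ) + 1)
          · simp only [hw, Fin.cases_succ]
            exact lapVec_ne_zero M _ (by omega) (by have := j.isLt; omega)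
      have hinj : Function.Injective μf := by
        intro a b hab
        induction a using Fin.cases with
        | zero =>
          induction b using Fin.cases with
          | zero => rfl
          | succ j =>
            exfalso
            simp only [hμf, Fin.cases_zero, Fin.cases_succ] at hab
            exact hμ ((j : ℕ) + 1) (by omega) (by have := j.isLt; omega) hab
        | succ i =>
          induction b using Fin.cases with
          | zero =>
            exfalso
            simp only [hμf, Fin.cases_zero, Fin.cases_succ] at hab
            exact hμ ((i : ℕ) + 1) (by omega) (by have := i.isLt; omega) hab.symm
          | succ j =>
            simp only [hμf, Fin.cases_succ] at hab
            have hij : (i : ℕ) = (j : ℕ) := by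
              by_contra hne
              rcases Nat.lt_or_ge (i : ℕ) (j : ℕ) with h | h
              · have := lapMu_strictMono M (a := (i : ℕ) + 1) (b := (j : ℕ) + 1)
                  (by omega) (by have := j.isLt; omega)
                push_cast at this hab
                linarith
              · have := lapMu_strictMono M (a := (j : ℕ) + 1) (b := (i : ℕ) + 1)
                  (by omega) (by have := i.isLt; omega)
                push_cast at this hab
                linarith
            congr 1
            exact Fin.ext hij
      have li := Module.End.eigenvectors_linearIndependent' f μf hinj w heig
      have hcard := li.fintype_card_le_finrank
      simp only [Fintype.card_fin, Module.finrank_fintype_fun_eq_card] at hcard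
      omega
    · rintro ⟨k, hk1, hk2, rfl⟩
      refine ⟨lapVec M k, lapVec_ne_zero M k hk1 hk2, ?_⟩
      have := lapVec_eigen M k
      push_cast at this ⊢
      exact this
  · rintro μ ⟨v, hv0, hv⟩
    by_contra him
    set f : Module.End ℂ (Fin (M+1) → ℂ) := (discreteLaplacian (M+1) ℂ).mulVecLin with hf
    set μf : Fin (M+2) → ℂ := Fin.cases μ
      (fun j => (((2 - 2 * Real.cos ((((j : ℕ) + 1 : ℕ) : ℝ) * Real.pi / ((M : ℝ) + 2))) : ℝ) : ℂ))
      with hμf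
    set w : Fin (M+2) → (Fin (M+1) → ℂ) := Fin.cases v
      (fun j => fun i => ((lapVec M ((j : ℕ) + 1) i : ℝ) : ℂ)) with hw
    have heig : ∀ i, f.HasEigenvector (μf i) (w i) := by
      intro i
      induction i using Fin.cases with
      | zero =>
        refine ⟨Module.End.mem_eigenspace_iff.2 ?_, by simpa [hw] using hv0⟩
        simp only [hμf, hw, Fin.cases_zero, hf, Matrix.mulVecLin_apply]
        exact hv
      | succ j =>
        refine ⟨Module.End.mem_eigenspace_iff.2 ?_, ?_⟩
        · simp only [hμf, hw, Fin.cases_succ, hf, Matrix.mulVecLin_apply]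
          exact lapVec_eigen_C M ((j : ℕ) + 1)
        · simp only [hw, Fin.cases_succ]
          exact lapVecC_ne_zero M _ (by omega) (by have := j.isLt; omega)
    have hinj : Function.Injective μf := by
      intro a b hab
      induction a using Fin.cases with
      | zero =>
        induction b using Fin.cases with
        | zero => rfl
        | succ j =>
          exfalso
          simp only [hμf, Fin.cases_zero, Fin.cases_succ] at hab
          exact him (by rw [hab, Complex.ofReal_im])
      | succ i =>
        induction b using Fin.cases with
        | zero =>
          exfalso
          simp only [hμf, Fin.cases_zero, Fin.cases_succ] at hab
          exact him (by rw [← hab, Complex.ofReal_im])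
        | succ j =>
          simp only [hμf, Fin.cases_succ, Complex.ofReal_inj] at hab
          have hij : (i : ℕ) = (j : ℕ) := by
            by_contra hne
            rcases Nat.lt_or_ge (i : ℕ) (j : ℕ) with h | h
            · have := lapMu_strictMono M (a := (i : ℕ) + 1) (b := (j : ℕ) + 1)
                (by omega) (by have := j.isLt; omega)
              push_cast at this hab
              linarith
            · have := lapMu_strictMono M (a := (j : ℕ) + 1) (b := (i : ℕ) + 1)
                (by omega) (by have := i.isLt; omega)
              push_cast at this hab
              linarith
          congr 1
          exact Fin.ext hij
    have li := Module.End.eigenvectors_linearIndependent' f μf hinj w heig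
    have hcard := li.fintype_card_le_finrank
    simp only [Fintype.card_fin, Module.finrank_fintype_fun_eq_card] at hcard
    omega
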